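/- Let A be an n×n Hermitian matrix and θ ∈ ℝ. Then the uniform average over s = ±1 satisfies: (1/2)Σ_{s=±1} e^{isθA} ρ e^{-isθA} = ρ + θ²(AρA - ½(A²ρ + ρA²)) + R(θ), where ‖R(θ)‖ ≤ C θ⁴ for θ ∈ [-1,1], with C depending only on ‖A‖ and ‖ρ‖. In particular the averaged channel agrees with e^{θ²𝓓}(ρ) up to O(θ⁴), where 𝓓(ρ) = AρA - ½{A²,ρ}. -/

import Mathlib

open Matrix NormedSpace

attribute [local instance] Matrix.frobeniusNormedAddCommGroup Matrix.frobeniusNormedSpace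

set_option maxHeartbeats 2000000

section AuxExp

set_option linter.unusedSectionVars false

open NormedSpace
variable {𝔸 : Type*} [NormedRing 𝔸] [NormedAlgebra ℂ 𝔸] [CompleteSpace 𝔸]

lemma exp_taylor_bound (x : 𝔸) (k : ℕ) (hk : 1 ≤ k) :
    ‖exp x - ∑ i ∈ Finset.range k, ((i.factorial : ℂ))⁻¹ • x ^ i‖ ≤ ‖x‖ ^ k * Real.exp ‖x‖ := by
  have hs : Summable fun i : ℕ => ((i.factorial : ℂ))⁻¹ • x ^ i := expSeries_summable' x
  have hsplit := Summable.sum_add_tsum_nat_add k hs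
  have hexp : exp x = ∑' i : ℕ, ((i.factorial : ℂ))⁻¹ • x ^ i := by
    rw [exp_eq_tsum ℂ]
  rw [hexp, ← hsplit, add_sub_cancel_left]
  have hg : HasSum (fun i : ℕ => ‖x‖ ^ k * (((i.factorial : ℝ))⁻¹ * ‖x‖ ^ i))
      (‖x‖ ^ k * Real.exp ‖x‖) := by
    have h0 : HasSum (fun i : ℕ => ((i.factorial : ℝ))⁻¹ • ‖x‖ ^ i) (exp ‖x‖) :=
      exp_series_hasSum_exp' ‖x‖
    rw [← Real.exp_eq_exp_ℝ] at h0
    simpa [smul_eq_mul] using h0.mul_left (‖x‖ ^ k)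
  refine tsum_of_norm_bounded hg fun i => ?_
  have h1 : ‖((i + k).factorial : ℂ)⁻¹ • x ^ (i + k)‖ = (((i + k).factorial : ℝ))⁻¹ * ‖x ^ (i + k)‖ := by
    rw [norm_smul]
    simp
  rw [h1]
  have h2 : ‖x ^ (i + k)‖ ≤ ‖x‖ ^ (i + k) := norm_pow_le' x (by omega)
  have h3 : (((i + k).factorial : ℝ))⁻¹ ≤ ((i.factorial : ℝ))⁻¹ := by
    apply inv_anti₀
    · positivity
    · exact_mod_cast Nat.factorial_le (by omega)
  calc (((i + k).factorial : ℝ))⁻¹ * ‖x ^ (i + k)‖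
      ≤ ((i.factorial : ℝ))⁻¹ * ‖x‖ ^ (i + k) := by
        apply mul_le_mul h3 h2 (norm_nonneg _) (by positivity)
    _ = ‖x‖ ^ k * (((i.factorial : ℝ))⁻¹ * ‖x‖ ^ i) := by rw [pow_add]; ring
variable {𝔸 : Type*} [NormedRing 𝔸] [NormedAlgebra ℂ 𝔸] [CompleteSpace 𝔸]

/-- left multiplication as a CLM -/
noncomputable def lmulCLM (X : 𝔸) : 𝔸 →L[ℂ] 𝔸 := ContinuousLinearMap.mul ℂ 𝔸 X
/-- right multiplication as a CLM -/
noncomputable def rmulCLM (X : 𝔸) : 𝔸 →L[ℂ] 𝔸 := (ContinuousLinearMap.mul ℂ 𝔸).flip X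

@[simp] lemma lmulCLM_apply (X a : 𝔸) : lmulCLM X a = X * a := rfl
@[simp] lemma rmulCLM_apply (X a : 𝔸) : rmulCLM X a = a * X := rfl

/-- lmul as an algebra hom into CLM endos -/
noncomputable def lmulAlgHom : 𝔸 →ₐ[ℂ] (𝔸 →L[ℂ] 𝔸) where
  toFun := lmulCLM
  map_one' := by ext a; simp
  map_mul' X Y := by ext a; simp [mul_assoc]
  map_zero' := by ext a; simp
  map_add' X Y := by ext a; simp [add_mul]
  commutes' c := by
    ext a
    simp [Algebra.algebraMap_eq_smul_one, smul_mul_assoc]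

noncomputable def rmulAlgHom : 𝔸ᵐᵒᵖ →ₐ[ℂ] (𝔸 →L[ℂ] 𝔸) where
  toFun Y := rmulCLM Y.unop
  map_one' := by ext a; simp
  map_mul' X Y := by ext a; simp [mul_assoc]
  map_zero' := by ext a; simp
  map_add' X Y := by ext a; simp [mul_add]
  commutes' c := by
    ext a
    simp [Algebra.algebraMap_eq_smul_one, mul_smul_comm]

lemma exp_lmulCLM (X : 𝔸) : exp (lmulCLM X) = lmulCLM (exp X) := by
  letI : NormedAlgebra ℚ 𝔸 := NormedAlgebra.restrictScalars ℚ ℂ 𝔸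
  letI : NormedAlgebra ℚ (𝔸 →L[ℂ] 𝔸) := NormedAlgebra.restrictScalars ℚ ℂ (𝔸 →L[ℂ] 𝔸)
  have h : Continuous (lmulAlgHom (𝔸 := 𝔸)) := (ContinuousLinearMap.mul ℂ 𝔸).continuous
  exact (map_exp (lmulAlgHom (𝔸 := 𝔸)) h X).symm

lemma exp_rmulCLM (X : 𝔸) : exp (rmulCLM X) = rmulCLM (exp X) := by
  letI : NormedAlgebra ℚ 𝔸 := NormedAlgebra.restrictScalars ℚ ℂ 𝔸
  letI : NormedAlgebra ℚ (𝔸 →L[ℂ] 𝔸) := NormedAlgebra.restrictScalars ℚ ℂ (𝔸 →L[ℂ] 𝔸)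
  have h : Continuous (rmulAlgHom (𝔸 := 𝔸)) := by
    have : Continuous fun Y : 𝔸ᵐᵒᵖ => (ContinuousLinearMap.mul ℂ 𝔸).flip Y.unop :=
      (ContinuousLinearMap.mul ℂ 𝔸).flip.continuous.comp MulOpposite.continuous_unop
    exact this
  have := (map_exp (rmulAlgHom (𝔸 := 𝔸)) h (MulOpposite.op X)).symm
  rw [exp_op] at this
  exact this

lemma exp_conj_clm (X Y ρ : 𝔸) :
    exp (lmulCLM X + rmulCLM Y) ρ = exp X * ρ * exp Y := by
  letI : NormedAlgebra ℚ (𝔸 →L[ℂ] 𝔸) := NormedAlgebra.restrictScalars ℚ ℂ (𝔸 →L[ℂ] 𝔸)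
  have hcomm : Commute (lmulCLM X) (rmulCLM Y) := by
    ext a; simp [mul_assoc]
  rw [exp_add_of_commute hcomm, exp_lmulCLM, exp_rmulCLM]
  simp [mul_assoc]

lemma lmulCLM_smul (z : ℂ) (X : 𝔸) : lmulCLM (z • X) = z • lmulCLM X :=
  _root_.map_smul (ContinuousLinearMap.mul ℂ 𝔸) z X

lemma rmulCLM_smul (z : ℂ) (X : 𝔸) : rmulCLM (z • X) = z • rmulCLM X :=
  _root_.map_smul (ContinuousLinearMap.mul ℂ 𝔸).flip z X

lemma exp_conj_smul (z : ℂ) (X Y ρ : 𝔸) :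
    exp (z • (lmulCLM X + rmulCLM Y)) ρ = exp (z • X) * ρ * exp (z • Y) := by
  rw [smul_add, ← lmulCLM_smul, ← rmulCLM_smul, exp_conj_clm]

lemma norm_lmulCLM_le (X : 𝔸) : ‖lmulCLM X‖ ≤ ‖X‖ :=
  ContinuousLinearMap.opNorm_le_bound _ (norm_nonneg X) fun a => norm_mul_le X a

lemma norm_rmulCLM_le (X : 𝔸) : ‖rmulCLM X‖ ≤ ‖X‖ :=
  ContinuousLinearMap.opNorm_le_bound _ (norm_nonneg X) fun a => by
    rw [rmulCLM_apply, mul_comm ‖X‖]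
    exact norm_mul_le a X

lemma avg_taylor (X ρ : 𝔸) (θ : ℝ) (hθ : |θ| ≤ 1) :
    ‖(1/2:ℂ) • (exp ((θ:ℂ) • X) * ρ * exp ((-(θ:ℂ)) • X)
        + exp ((-(θ:ℂ)) • X) * ρ * exp ((θ:ℂ) • X))
      - (ρ + ((θ:ℂ)^2) • ((1/2:ℂ) • (X*X*ρ + ρ*(X*X)) - X*ρ*X))‖
    ≤ (2*‖X‖)^4 * Real.exp (2*‖X‖) * ‖ρ‖ * θ^4 := by
  set M : 𝔸 →L[ℂ] 𝔸 := lmulCLM X + rmulCLM (-X) with hM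
  have hMnorm : ‖M‖ ≤ 2 * ‖X‖ := by
    calc ‖M‖ ≤ ‖lmulCLM X‖ + ‖rmulCLM (-X)‖ := norm_add_le _ _
    _ ≤ ‖X‖ + ‖X‖ := by
        have := norm_rmulCLM_le (-X)
        rw [norm_neg] at this
        exact add_le_add (norm_lmulCLM_le X) this
    _ = 2 * ‖X‖ := by ring
  have e1 : exp ((θ:ℂ) • X) * ρ * exp ((-(θ:ℂ)) • X) = exp ((θ:ℂ) • M) ρ := by
    rw [hM, exp_conj_smul, smul_neg, ← neg_smul]
  have e2 : exp ((-(θ:ℂ)) • X) * ρ * exp ((θ:ℂ) • X) = exp ((-(θ:ℂ)) • M) ρ := by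
    rw [hM, exp_conj_smul, smul_neg, ← neg_smul, neg_neg]
  set x : 𝔸 →L[ℂ] 𝔸 := (θ:ℂ) • M with hx
  have hxneg : (-(θ:ℂ)) • M = -x := by rw [hx]; exact neg_smul (θ:ℂ) M
  have h4 : ‖exp x - ∑ i ∈ Finset.range 4, ((i.factorial : ℂ))⁻¹ • x ^ i‖
      ≤ ‖x‖ ^ 4 * Real.exp ‖x‖ := exp_taylor_bound x 4 (by norm_num)
  have h4' : ‖exp (-x) - ∑ i ∈ Finset.range 4, ((i.factorial : ℂ))⁻¹ • (-x) ^ i‖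
      ≤ ‖x‖ ^ 4 * Real.exp ‖x‖ := by
    have := exp_taylor_bound (-x) 4 (by norm_num)
    rwa [norm_neg] at this
  have h0 : ((Nat.factorial 0 : ℕ) : ℂ) = 1 := by norm_num [Nat.factorial]
  have h1 : ((Nat.factorial 1 : ℕ) : ℂ) = 1 := by norm_num [Nat.factorial]
  have h2 : ((Nat.factorial 2 : ℕ) : ℂ) = 2 := by norm_num [Nat.factorial]
  have h3 : ((Nat.factorial 3 : ℕ) : ℂ) = 6 := by norm_num [Nat.factorial]
  have hMa : ∀ σ : 𝔸, M σ = X * σ + σ * (-X) := fun σ => rfl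
  have hcen : ρ + ((θ:ℂ)^2) • ((1/2:ℂ) • (X*X*ρ + ρ*(X*X)) - X*ρ*X)
      = (1/2:ℂ) • ((∑ i ∈ Finset.range 4, ((i.factorial : ℂ))⁻¹ • x ^ i) ρ
          + (∑ i ∈ Finset.range 4, ((i.factorial : ℂ))⁻¹ • (-x) ^ i) ρ) := by
    simp only [hx, Finset.sum_range_succ, Finset.sum_range_zero, zero_add, h0, h1, h2, h3,
      pow_succ, pow_zero, ContinuousLinearMap.add_apply, ContinuousLinearMap.smul_apply,
      ContinuousLinearMap.mul_apply, ContinuousLinearMap.one_apply,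
      ContinuousLinearMap.neg_apply, hMa, one_smul, inv_one]
    simp only [mul_neg, neg_mul, mul_add, add_mul, mul_assoc, smul_add, smul_neg, neg_neg,
      smul_smul, mul_smul_comm, smul_mul_assoc]
    module
  have hθM : ‖x‖ ≤ |θ| * ‖M‖ := by
    have := _root_.norm_smul_le ((θ:ℂ)) M
    rwa [Complex.norm_real, Real.norm_eq_abs] at this
  have hxnorm : ‖x‖ ≤ 2 * ‖X‖ := by
    refine hθM.trans ?_
    calc |θ| * ‖M‖ ≤ 1 * (2 * ‖X‖) := mul_le_mul hθ hMnorm (norm_nonneg M) zero_le_one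
      _ = 2 * ‖X‖ := one_mul _
  have hxpow : ‖x‖ ^ 4 ≤ θ^4 * (2*‖X‖)^4 := by
    calc ‖x‖ ^ 4 ≤ (|θ| * ‖M‖) ^ 4 := pow_le_pow_left₀ (norm_nonneg x) hθM 4
      _ = |θ|^4 * ‖M‖^4 := by rw [mul_pow]
      _ ≤ θ^4 * (2*‖X‖)^4 := by
          rw [← abs_pow, abs_of_nonneg (a := θ^4) (by positivity)]
          gcongr
  rw [e1, e2, hxneg, hcen]
  have hdiff : (1/2:ℂ) • ((exp x) ρ + (exp (-x)) ρ)
        - (1/2:ℂ) • ((∑ i ∈ Finset.range 4, ((i.factorial : ℂ))⁻¹ • x ^ i) ρ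
            + (∑ i ∈ Finset.range 4, ((i.factorial : ℂ))⁻¹ • (-x) ^ i) ρ)
      = (1/2:ℂ) • (((exp x - ∑ i ∈ Finset.range 4, ((i.factorial : ℂ))⁻¹ • x ^ i) ρ)
          + ((exp (-x) - ∑ i ∈ Finset.range 4, ((i.factorial : ℂ))⁻¹ • (-x) ^ i) ρ)) := by
    simp only [ContinuousLinearMap.sub_apply]
    module
  rw [hdiff]
  have hb1 : ‖(exp x - ∑ i ∈ Finset.range 4, ((i.factorial : ℂ))⁻¹ • x ^ i) ρ‖
      ≤ ‖x‖ ^ 4 * Real.exp ‖x‖ * ‖ρ‖ :=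
    (ContinuousLinearMap.le_opNorm _ _).trans (mul_le_mul_of_nonneg_right h4 (norm_nonneg ρ))
  have hb2 : ‖(exp (-x) - ∑ i ∈ Finset.range 4, ((i.factorial : ℂ))⁻¹ • (-x) ^ i) ρ‖
      ≤ ‖x‖ ^ 4 * Real.exp ‖x‖ * ‖ρ‖ :=
    (ContinuousLinearMap.le_opNorm _ _).trans (mul_le_mul_of_nonneg_right h4' (norm_nonneg ρ))
  have hterm : ‖x‖ ^ 4 * Real.exp ‖x‖ * ‖ρ‖
      ≤ (2*‖X‖)^4 * Real.exp (2*‖X‖) * ‖ρ‖ * θ^4 := by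
    calc ‖x‖ ^ 4 * Real.exp ‖x‖ * ‖ρ‖
        ≤ (θ^4 * (2*‖X‖)^4) * Real.exp (2*‖X‖) * ‖ρ‖ := by
          exact mul_le_mul (mul_le_mul hxpow (Real.exp_le_exp.2 hxnorm)
            (Real.exp_pos _).le (by positivity)) le_rfl (norm_nonneg ρ) (by positivity)
      _ = (2*‖X‖)^4 * Real.exp (2*‖X‖) * ‖ρ‖ * θ^4 := by ring
  have hhalf : ‖(1/2:ℂ)‖ = 1/2 := by norm_num
  refine (_root_.norm_smul_le _ _).trans ?_
  rw [hhalf]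
  have := norm_add_le ((exp x - ∑ i ∈ Finset.range 4, ((i.factorial : ℂ))⁻¹ • x ^ i) ρ)
    ((exp (-x) - ∑ i ∈ Finset.range 4, ((i.factorial : ℂ))⁻¹ • (-x) ^ i) ρ)
  nlinarith [hb1, hb2, hterm, norm_nonneg ((exp x - ∑ i ∈ Finset.range 4, ((i.factorial : ℂ))⁻¹ • x ^ i) ρ)]

lemma exp_sq_smul_bound (D : 𝔸 →L[ℂ] 𝔸) (ρ : 𝔸) : ∃ K : ℝ, ∀ θ : ℝ, |θ| ≤ 1 →
    ‖exp ((θ ^ 2 : ℂ) • D) ρ - (ρ + (θ ^ 2 : ℂ) • D ρ)‖ ≤ K * θ ^ 4 := by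
  refine ⟨‖D‖^2 * Real.exp ‖D‖ * ‖ρ‖, fun θ habs => ?_⟩
  set y : 𝔸 →L[ℂ] 𝔸 := (θ^2 : ℂ) • D with hy
  have h2t : ‖exp y - ∑ i ∈ Finset.range 2, ((i.factorial : ℂ))⁻¹ • y ^ i‖
      ≤ ‖y‖^2 * Real.exp ‖y‖ := exp_taylor_bound y 2 (by norm_num)
  have hs2 : (∑ i ∈ Finset.range 2, ((i.factorial : ℂ))⁻¹ • y ^ i) = 1 + y := by
    simp [Finset.sum_range_succ, Nat.factorial]
  have happ2 : ((1 : 𝔸 →L[ℂ] 𝔸) + y) ρ = ρ + (θ ^ 2 : ℂ) • D ρ := by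
    simp only [ContinuousLinearMap.add_apply, ContinuousLinearMap.one_apply, hy,
      ContinuousLinearMap.smul_apply]
  have hynorm : ‖y‖ ≤ θ^2 * ‖D‖ := by
    have := _root_.norm_smul_le ((θ:ℂ)^2) D
    simpa [norm_pow, Complex.norm_real, sq_abs] using this
  have hθ2 : θ^2 ≤ 1 := by
    have := abs_le.1 habs
    nlinarith
  have hy1 : ‖y‖ ≤ ‖D‖ := hynorm.trans (by nlinarith [norm_nonneg D, sq_nonneg θ])
  have hy2 : ‖y‖^2 ≤ θ^4 * ‖D‖^2 := by
    calc ‖y‖^2 ≤ (θ^2 * ‖D‖)^2 := pow_le_pow_left₀ (norm_nonneg y) hynorm 2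
      _ = θ^4 * ‖D‖^2 := by ring
  rw [← happ2, ← hs2, ← ContinuousLinearMap.sub_apply]
  calc ‖(exp y - ∑ i ∈ Finset.range 2, ((i.factorial : ℂ))⁻¹ • y ^ i) ρ‖
      ≤ ‖exp y - ∑ i ∈ Finset.range 2, ((i.factorial : ℂ))⁻¹ • y ^ i‖ * ‖ρ‖ :=
        ContinuousLinearMap.le_opNorm _ _
    _ ≤ (‖y‖^2 * Real.exp ‖y‖) * ‖ρ‖ := mul_le_mul_of_nonneg_right h2t (norm_nonneg ρ)
    _ ≤ ((θ^4 * ‖D‖^2) * Real.exp ‖D‖) * ‖ρ‖ := by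
        refine mul_le_mul_of_nonneg_right ?_ (norm_nonneg ρ)
        exact mul_le_mul hy2 (Real.exp_le_exp.2 hy1) (Real.exp_pos _).le (by positivity)
    _ = ‖D‖^2 * Real.exp ‖D‖ * ‖ρ‖ * θ^4 := by ring

end AuxExp

/-- The dissipator superoperator `𝓓(ρ) = AρA - ½{A²,ρ}` as a linear map. -/
noncomputable def dissipator {n : ℕ} (A : Matrix (Fin n) (Fin n) ℂ) :
    Matrix (Fin n) (Fin n) ℂ →ₗ[ℂ] Matrix (Fin n) (Fin n) ℂ where
  toFun ρ := A * ρ * A - (1/2 : ℂ) • (A ^ 2 * ρ + ρ * A ^ 2)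
  map_add' x y := by
    simp only [mul_add, add_mul, smul_add]
    abel
  map_smul' c x := by
    simp only [RingHom.id_apply, Matrix.mul_smul, Matrix.smul_mul, smul_add, smul_sub,
      smul_comm c]

instance clmMatrixIsTopologicalRing {n : ℕ} :
    IsTopologicalRing (Matrix (Fin n) (Fin n) ℂ →L[ℂ] Matrix (Fin n) (Fin n) ℂ) := by
  let _ : NormedRing (Matrix (Fin n) (Fin n) ℂ →L[ℂ] Matrix (Fin n) (Fin n) ℂ) :=
    ContinuousLinearMap.toNormedRing
  exact NonUnitalSeminormedRing.toIsTopologicalRing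

theorem stmt_10 {n : ℕ} (A ρ : Matrix (Fin n) (Fin n) ℂ) (hA : A.IsHermitian) :
    (∃ C : ℝ, ∀ θ : ℝ, θ ∈ Set.Icc (-1 : ℝ) 1 →
      ‖(1/2 : ℂ) • (∑ s : Bool,
            exp (((if s then 1 else -1 : ℂ) * Complex.I * (θ : ℂ)) • A) * ρ *
              exp ((-((if s then 1 else -1 : ℂ) * Complex.I * (θ : ℂ))) • A)) -
          (ρ + (θ ^ 2 : ℂ) • (A * ρ * A - (1/2 : ℂ) • (A ^ 2 * ρ + ρ * A ^ 2)))‖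
        ≤ C * θ ^ 4) ∧
    (∃ C' : ℝ, ∀ θ : ℝ, θ ∈ Set.Icc (-1 : ℝ) 1 →
      ‖(1/2 : ℂ) • (∑ s : Bool,
            exp (((if s then 1 else -1 : ℂ) * Complex.I * (θ : ℂ)) • A) * ρ *
              exp ((-((if s then 1 else -1 : ℂ) * Complex.I * (θ : ℂ))) • A)) -
          exp ((θ ^ 2 : ℂ) • LinearMap.toContinuousLinearMap (dissipator A)) ρ‖
        ≤ C' * θ ^ 4) := by
  letI : NormedRing (Matrix (Fin n) (Fin n) ℂ) :=
    { Matrix.frobeniusNormedAddCommGroup, Matrix.instRing with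
      norm_mul_le := Matrix.frobenius_norm_mul
      toMetricSpace := (Matrix.frobeniusNormedAddCommGroup (m := Fin n) (n := Fin n)
        (α := ℂ)).toMetricSpace.replaceUniformity rfl }
  letI : NormedAlgebra ℂ (Matrix (Fin n) (Fin n) ℂ) :=
    { Matrix.frobeniusNormedSpace (α := ℂ), Matrix.instAlgebra with }
  set X : Matrix (Fin n) (Fin n) ℂ := Complex.I • A with hX
  set C0 : ℝ := (2*‖X‖)^4 * Real.exp (2*‖X‖) * ‖ρ‖ with hC0
  have key : ∀ θ : ℝ, θ ∈ Set.Icc (-1 : ℝ) 1 →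
      ‖(1/2 : ℂ) • (∑ s : Bool,
            exp (((if s then 1 else -1 : ℂ) * Complex.I * (θ : ℂ)) • A) * ρ *
              exp ((-((if s then 1 else -1 : ℂ) * Complex.I * (θ : ℂ))) • A)) -
          (ρ + (θ ^ 2 : ℂ) • (A * ρ * A - (1/2 : ℂ) • (A ^ 2 * ρ + ρ * A ^ 2)))‖
        ≤ C0 * θ ^ 4 := by
    intro θ hθ
    have habs : |θ| ≤ 1 := abs_le.2 ⟨hθ.1, hθ.2⟩
    have h := avg_taylor X ρ θ habs
    have e1 : ((1:ℂ) * Complex.I * (θ:ℂ)) • A = (θ:ℂ) • X := by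
      rw [hX, smul_smul]; congr 1; ring
    have e2 : (-((1:ℂ) * Complex.I * (θ:ℂ))) • A = (-(θ:ℂ)) • X := by
      rw [hX, smul_smul]; congr 1; ring
    have e3 : ((-1:ℂ) * Complex.I * (θ:ℂ)) • A = (-(θ:ℂ)) • X := by
      rw [hX, smul_smul]; congr 1; ring
    have e4 : (-((-1:ℂ) * Complex.I * (θ:ℂ))) • A = (θ:ℂ) • X := by
      rw [hX, smul_smul]; congr 1; ring
    have ecen : A * ρ * A - (1/2 : ℂ) • (A ^ 2 * ρ + ρ * A ^ 2)
        = (1/2:ℂ) • (X*X*ρ + ρ*(X*X)) - X*ρ*X := by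
      rw [hX]
      simp only [smul_mul_assoc, mul_smul_comm, smul_smul, Complex.I_mul_I, pow_two]
      module
    rw [Fintype.sum_bool]
    simp only [Bool.false_eq_true, if_true, if_false]
    rw [e1, e2, e3, e4, ecen]
    exact h
  constructor
  · exact ⟨C0, key⟩
  · set D' : Matrix (Fin n) (Fin n) ℂ →L[ℂ] Matrix (Fin n) (Fin n) ℂ :=
      LinearMap.toContinuousLinearMap (dissipator A) with hD'
    obtain ⟨K, hK⟩ := exp_sq_smul_bound D' ρ
    refine ⟨C0 + K, fun θ hθ => ?_⟩
    have habs : |θ| ≤ 1 := abs_le.2 ⟨hθ.1, hθ.2⟩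
    set y : Matrix (Fin n) (Fin n) ℂ →L[ℂ] Matrix (Fin n) (Fin n) ℂ := (θ^2 : ℂ) • D' with hy
    have hbound2 : ‖exp y ρ
          - (ρ + (θ ^ 2 : ℂ) • (A * ρ * A - (1/2 : ℂ) • (A ^ 2 * ρ + ρ * A ^ 2)))‖
        ≤ K * θ^4 := hK θ habs
    have hk := key θ hθ
    set BIG := (1/2 : ℂ) • (∑ s : Bool,
        exp (((if s then 1 else -1 : ℂ) * Complex.I * (θ : ℂ)) • A) * ρ *
          exp ((-((if s then 1 else -1 : ℂ) * Complex.I * (θ : ℂ))) • A)) with hBIG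
    set cen := ρ + (θ ^ 2 : ℂ) • (A * ρ * A - (1/2 : ℂ) • (A ^ 2 * ρ + ρ * A ^ 2)) with hcen
    calc ‖BIG - exp y ρ‖ ≤ ‖BIG - cen‖ + ‖cen - exp y ρ‖ := by
          have := norm_add_le (BIG - cen) (cen - exp y ρ)
          simpa using this
      _ ≤ C0 * θ^4 + K * θ^4 := by
          refine add_le_add hk ?_
          rw [norm_sub_rev]
          exact hbound2
      _ = (C0 + K) * θ^4 := by ring
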